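/- In the identity-design split model with y = β* + ε, E[ε_i] = 0 and Var(ε_i) = σ² independently across coordinates, the expected squared estimation error of the dense split estimator (with exact support recovery S) is E‖β − β*‖² = |S|·σ² + (1/(1+ν))²‖β*_{Sᶜ}‖² + (ν/(1+ν))²·|Sᶜ|·σ². As ν → ∞ this tends to p·σ², the MLE risk. -/

import Mathlib

open MeasureTheory Filter

/-- Risk of the split dense estimator with exact support recovery, and its ν → ∞ limit p·σ². -/
theorem split_estimator_risk {Ω : Type*} [MeasureSpace Ω]
    [IsProbabilityMeasure (volume : Measure Ω)]
    (p : ℕ) (S : Finset (Fin p)) (σ2 : ℝ)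
    (βstar : Fin p → ℝ) (ε : Ω → Fin p → ℝ)
    (hεint : ∀ i, Integrable (fun ω => ε ω i))
    (hεsqInt : ∀ i, Integrable (fun ω => (ε ω i)^2))
    (hεmean : ∀ i, (∫ ω, ε ω i) = 0)
    (hεvar : ∀ i, (∫ ω, (ε ω i)^2) = σ2) :
    (∀ ν : ℝ, 0 < ν →
      (∫ ω, ∑ i, ((if i ∈ S then βstar i + ε ω i
          else (ν / (1 + ν)) * (βstar i + ε ω i)) - βstar i)^2)
        = S.card * σ2 + (1 / (1 + ν))^2 * (∑ i ∈ Sᶜ, (βstar i)^2)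
          + (ν / (1 + ν))^2 * Sᶜ.card * σ2) ∧
    Tendsto (fun ν : ℝ => (S.card : ℝ) * σ2 + (1 / (1 + ν))^2 * (∑ i ∈ Sᶜ, (βstar i)^2)
          + (ν / (1 + ν))^2 * Sᶜ.card * σ2)
      atTop (nhds ((p : ℝ) * σ2)) := by
  constructor
  · intro ν hν
    have h1ν : (0:ℝ) < 1 + ν := by linarith
    set a : ℝ := ν / (1 + ν) with ha
    have hfun : ∀ i (ω : Ω), ((if i ∈ S then βstar i + ε ω i
          else a * (βstar i + ε ω i)) - βstar i)^2
        = (if i ∈ S then (ε ω i)^2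
          else a^2 * (ε ω i)^2 + (2 * a * (a * βstar i - βstar i)) * ε ω i
            + (a * βstar i - βstar i)^2) := by
      intro i ω
      by_cases hi : i ∈ S <;> simp [hi] <;> ring
    have hint : ∀ i : Fin p, Integrable (fun ω => if i ∈ S then (ε ω i)^2
          else a^2 * (ε ω i)^2 + (2 * a * (a * βstar i - βstar i)) * ε ω i
            + (a * βstar i - βstar i)^2) := by
      intro i
      by_cases hi : i ∈ S
      · simpa [hi] using hεsqInt i
      · simp only [hi, if_false]
        exact (((hεsqInt i).const_mul _).add ((hεint i).const_mul _)).add (integrable_const _)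
    have hval : ∀ i : Fin p, (∫ ω, (if i ∈ S then (ε ω i)^2
          else a^2 * (ε ω i)^2 + (2 * a * (a * βstar i - βstar i)) * ε ω i
            + (a * βstar i - βstar i)^2))
        = (if i ∈ S then σ2 else a^2 * σ2 + (1 / (1 + ν))^2 * (βstar i)^2) := by
      intro i
      by_cases hi : i ∈ S
      · simp [hi, hεvar i]
      · simp only [hi, if_false]
        have I1 : Integrable (fun ω => a^2 * ε ω i ^ 2) := (hεsqInt i).const_mul _
        have I2 : Integrable (fun ω => 2 * a * (a * βstar i - βstar i) * ε ω i) :=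
          (hεint i).const_mul _
        have I12 : Integrable (fun ω => a^2 * ε ω i ^ 2
            + 2 * a * (a * βstar i - βstar i) * ε ω i) := I1.add I2
        rw [integral_add I12 (integrable_const _), integral_add I1 I2,
          integral_const_mul, integral_const_mul, hεvar i, hεmean i,
          integral_const]
        have : a * βstar i - βstar i = -(1 / (1 + ν)) * βstar i := by
          rw [ha]; field_simp; ring
        rw [this]
        simp only [measure_univ, probReal_univ, ENNReal.toReal_one, one_smul, smul_eq_mul, one_mul]
        ring
    calc (∫ ω, ∑ i, ((if i ∈ S then βstar i + ε ω i
            else a * (βstar i + ε ω i)) - βstar i)^2)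
        = ∫ ω, ∑ i, (if i ∈ S then (ε ω i)^2
            else a^2 * (ε ω i)^2 + (2 * a * (a * βstar i - βstar i)) * ε ω i
              + (a * βstar i - βstar i)^2) := by
          congr 1; funext ω; exact Finset.sum_congr rfl fun i _ => hfun i ω
      _ = ∑ i, ∫ ω, (if i ∈ S then (ε ω i)^2
            else a^2 * (ε ω i)^2 + (2 * a * (a * βstar i - βstar i)) * ε ω i
              + (a * βstar i - βstar i)^2) :=
          integral_finset_sum _ (fun i _ => hint i)
      _ = ∑ i, (if i ∈ S then σ2 else a^2 * σ2 + (1 / (1 + ν))^2 * (βstar i)^2) :=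
          Finset.sum_congr rfl fun i _ => hval i
      _ = (∑ i ∈ S, (if i ∈ S then σ2 else a^2 * σ2 + (1 / (1 + ν))^2 * (βstar i)^2))
          + ∑ i ∈ Sᶜ, (if i ∈ S then σ2 else a^2 * σ2 + (1 / (1 + ν))^2 * (βstar i)^2) :=
          (Finset.sum_add_sum_compl S _).symm
      _ = S.card * σ2 + (1 / (1 + ν))^2 * (∑ i ∈ Sᶜ, (βstar i)^2)
          + a^2 * Sᶜ.card * σ2 := by
          rw [Finset.sum_congr rfl (fun i hi => if_pos hi),
            Finset.sum_congr rfl (fun i hi => if_neg (Finset.mem_compl.mp hi))]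
          rw [Finset.sum_const, Finset.sum_add_distrib, Finset.sum_const,
            ← Finset.mul_sum]
          push_cast
          ring
  · have h1 : Tendsto (fun ν : ℝ => 1 / (1 + ν)) atTop (nhds 0) := by
      have := tendsto_inv_atTop_zero.comp
        (tendsto_atTop_add_const_left atTop (1:ℝ) tendsto_id)
      simpa [one_div, Function.comp_def] using this
    have h2 : Tendsto (fun ν : ℝ => ν / (1 + ν)) atTop (nhds 1) := by
      have : ∀ᶠ ν : ℝ in atTop, ν / (1 + ν) = 1 - 1 / (1 + ν) := by
        filter_upwards [eventually_gt_atTop 0] with ν hν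
        have : (1:ℝ) + ν ≠ 0 := by positivity
        field_simp
        ring
      rw [tendsto_congr' this]
      simpa using (tendsto_const_nhds (x := (1:ℝ))).sub h1
    have hcard : (S.card : ℝ) + Sᶜ.card = p := by
      have := Finset.card_add_card_compl S
      have : S.card + Sᶜ.card = p := by simpa using this
      exact_mod_cast this
    have := (tendsto_const_nhds (x := (S.card : ℝ) * σ2)).add
        (((h1.pow 2).mul_const (∑ i ∈ Sᶜ, (βstar i)^2)))
      |>.add (((h2.pow 2).mul_const (Sᶜ.card : ℝ)).mul_const σ2)
    convert this using 2 <;> simp [← hcard] <;> ring
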